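/- Let S be a q^r-divisible spanning set of q^{r+1} points in PG(v-1,q) with v ≤ r+2. Then v = r+2 and S is the complement of a hyperplane, i.e., S equals the set of all points of PG(r+1,q) not on some fixed hyperplane (an affine space AG(r+1,q)). -/

import Mathlib

open Module
open scoped Classical

set_option linter.unusedSectionVars false
set_option maxHeartbeats 800000

section Helpers
variable {v : ℕ} {F : Type} [Field F] [Fintype F]


def myphi (w : Fin v → F) : (Fin v → F) →ₗ[F] F where
  toFun x := ∑ i, w i * x i
  map_add' x y := by simp [mul_add, Finset.sum_add_distrib]
  map_smul' c x := by simp [Finset.mul_sum, mul_left_comm]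

lemma myphi_apply (w x : Fin v → F) : myphi w x = ∑ i, w i * x i := rfl

lemma myphi_comm (w x : Fin v → F) : myphi w x = myphi x w := by
  simp [myphi_apply, mul_comm]

lemma myphi_ne_zero {w : Fin v → F} (hw : w ≠ 0) : myphi w ≠ 0 := by
  obtain ⟨i, hi⟩ := Function.ne_iff.mp hw
  intro h
  apply hi
  have := congrArg (fun f => f (Pi.single i (1:F))) h
  simpa [myphi_apply, Pi.single_apply, mul_ite, Finset.sum_ite_eq'] using this

lemma finrank_ker_myphi {w : Fin v → F} (hw : w ≠ 0) :
    finrank F (LinearMap.ker (myphi w)) = v - 1 := by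
  have h1 : finrank F (LinearMap.range (myphi w)) = 1 := by
    have hle : finrank F (LinearMap.range (myphi w)) ≤ 1 := by
      simpa using Submodule.finrank_le (LinearMap.range (myphi w))
    have hne : LinearMap.range (myphi w) ≠ ⊥ := by
      exact fun h => myphi_ne_zero hw (LinearMap.range_eq_bot.mp h)
    have hpos : finrank F (LinearMap.range (myphi w)) ≠ 0 := by
      intro h0
      exact hne (Submodule.finrank_eq_zero.mp h0)
    omega
  have h2 := LinearMap.finrank_range_add_finrank_ker (myphi w)
  rw [h1, Module.finrank_pi] at h2
  simp at h2
  omega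



lemma card_submodule (W : Submodule F (Fin v → F)) :
    (Finset.univ.filter (fun x : Fin v → F => x ∈ W)).card
      = Fintype.card F ^ finrank F W := by
  rw [← Fintype.card_subtype]
  exact card_eq_pow_finrank

lemma eq_span_of_mem {P : Submodule F (Fin v → F)} (hP : finrank F P = 1)
    {x : Fin v → F} (hx : x ∈ P) (hx0 : x ≠ 0) : P = Submodule.span F {x} := by
  have h1 : Submodule.span F {x} ≤ P := by
    rw [Submodule.span_le, Set.singleton_subset_iff]; exact hx
  have h2 : finrank F (Submodule.span F {x}) = 1 := finrank_span_singleton hx0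
  exact (Submodule.eq_of_le_of_finrank_eq h1 (by rw [h2, hP])).symm

lemma exists_gen {P : Submodule F (Fin v → F)} (hP : finrank F P = 1) :
    ∃ x : Fin v → F, x ≠ 0 ∧ x ∈ P ∧ P = Submodule.span F {x} := by
  have hne : P ≠ ⊥ := by
    intro h; rw [h] at hP; simp [finrank_bot] at hP
  obtain ⟨x, hx, hx0⟩ := (Submodule.ne_bot_iff P).mp hne
  exact ⟨x, hx0, hx, eq_span_of_mem hP hx hx0⟩

lemma card_nz {P : Submodule F (Fin v → F)} (hP : finrank F P = 1) :
    (Finset.univ.filter (fun x : Fin v → F => x ∈ P ∧ x ≠ 0)).card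
      = Fintype.card F - 1 := by
  have he : (Finset.univ.filter (fun x : Fin v → F => x ∈ P ∧ x ≠ 0))
      = (Finset.univ.filter (fun x : Fin v → F => x ∈ P)).erase 0 := by
    ext x; simp [Finset.mem_erase, and_comm]
  rw [he, Finset.card_erase_of_mem (by simp [Submodule.zero_mem]),
    card_submodule, hP, pow_one]

lemma mem_ker_iff_le {P : Submodule F (Fin v → F)} {x : Fin v → F}
    (hP : P = Submodule.span F {x}) (W : Submodule F (Fin v → F)) :
    P ≤ W ↔ x ∈ W := by
  subst hP
  rw [Submodule.span_le, Set.singleton_subset_iff]; rfl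

end Helpers

/-- a `q^r`-divisible spanning set of `q^(r+1)` points in
`PG(v-1,q)` with `v ≤ r+2` forces `v = r+2`, and then `S` is the complement of a
hyperplane, i.e. the points of an affine space `AG(r+1,q)`. -/
theorem stmt7 (q v r : ℕ) (hv : v ≤ r + 2)
    (F : Type) [Field F] [Fintype F] (hF : Fintype.card F = q)
    (S : Finset (Submodule F (Fin v → F))) (hpts : ∀ P ∈ S, finrank F P = 1)
    (hcard : S.card = q ^ (r + 1))
    (hdiv : ∀ H : Submodule F (Fin v → F), finrank F H = v - 1 →
      q ^ r ∣ (S.filter fun P => P ≤ H).card)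
    (hspan : (⨆ P ∈ S, P) = (⊤ : Submodule F (Fin v → F))) :
    v = r + 2 ∧ ∃ H : Submodule F (Fin v → F), finrank F H = v - 1 ∧
      ∀ P : Submodule F (Fin v → F), finrank F P = 1 → (P ∈ S ↔ ¬ P ≤ H) := by
  subst hF
  set c := Fintype.card F with hc
  have hq : 2 ≤ c := Fintype.one_lt_card
  -- the finset of nonzero vectors of a point
  set nz : Submodule F (Fin v → F) → Finset (Fin v → F) :=
    fun P => Finset.univ.filter (fun x => x ∈ P ∧ x ≠ 0) with hnz
  have hdisj : ∀ P ∈ S, ∀ Q ∈ S, P ≠ Q → Disjoint (nz P) (nz Q) := by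
    intro P hP Q hQ hPQ
    rw [Finset.disjoint_left]
    intro x hxP hxQ
    simp only [hnz, Finset.mem_filter] at hxP hxQ
    exact hPQ ((eq_span_of_mem (hpts P hP) hxP.2.1 hxP.2.2).trans
      (eq_span_of_mem (hpts Q hQ) hxQ.2.1 hxQ.2.2).symm)
  have hUcard : (S.biUnion nz).card = c ^ (r + 1) * (c - 1) := by
    rw [Finset.card_biUnion hdisj]
    rw [Finset.sum_congr rfl (fun P hP => card_nz (hpts P hP))]
    simp [hcard, mul_comm]
    exact Or.inl rfl
  -- total count of vectors
  have hcardV : Fintype.card (Fin v → F) = c ^ v := by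
    simp [hc]
  -- Step A : v = r + 2
  have hveq : v = r + 2 := by
    by_contra hne
    have hvle : v ≤ r + 1 := by omega
    have hsub : S.biUnion nz ⊆ Finset.univ.erase 0 := by
      intro x hx
      simp only [Finset.mem_biUnion, hnz, Finset.mem_filter] at hx
      obtain ⟨P, _, _, _, hx0⟩ := hx
      simp [hx0]
    have h1 : c ^ (r + 1) * (c - 1) ≤ c ^ v - 1 := by
      have := Finset.card_le_card hsub
      rwa [hUcard, Finset.card_erase_of_mem (Finset.mem_univ 0),
        Finset.card_univ, hcardV] at this
    have h2 : c ^ v ≤ c ^ (r + 1) := Nat.pow_le_pow_right (by omega) hvle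
    have h3 : c ^ (r + 1) ≤ c ^ (r + 1) * (c - 1) :=
      Nat.le_mul_of_pos_right _ (by omega)
    have h4 : 1 ≤ c ^ (r + 1) := Nat.one_le_pow _ _ (by omega)
    omega
  subst hveq
  refine ⟨rfl, ?_⟩
  -- Step B : there is an empty hyperplane
  have hempty : ∃ w : Fin (r + 2) → F, w ≠ 0 ∧
      (S.filter fun P => P ≤ LinearMap.ker (myphi w)).card = 0 := by
    by_contra hno
    push_neg at hno
    have hlow : ∀ w ∈ (Finset.univ.erase (0 : Fin (r + 2) → F)),
        c ^ r ≤ (S.filter fun P => P ≤ LinearMap.ker (myphi w)).card := by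
      intro w hw
      rw [Finset.mem_erase] at hw
      have hdvd := hdiv (LinearMap.ker (myphi w)) (by
        rw [finrank_ker_myphi hw.1])
      exact Nat.le_of_dvd (Nat.pos_of_ne_zero (hno w hw.1)) hdvd
    -- compute the sum
    have hsum : ∑ w ∈ Finset.univ.erase (0 : Fin (r + 2) → F),
        (S.filter fun P => P ≤ LinearMap.ker (myphi w)).card
        = c ^ (r + 1) * (c ^ (r + 1) - 1) := by
      have hstep : ∀ w, (S.filter fun P => P ≤ LinearMap.ker (myphi w)).card
          = ∑ P ∈ S, if P ≤ LinearMap.ker (myphi w) then 1 else 0 := by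
        intro w; rw [Finset.card_filter]
      rw [Finset.sum_congr rfl (fun w _ => hstep w), Finset.sum_comm]
      have hinner : ∀ P ∈ S, ∑ w ∈ Finset.univ.erase (0 : Fin (r + 2) → F),
          (if P ≤ LinearMap.ker (myphi w) then 1 else 0) = c ^ (r + 1) - 1 := by
        intro P hP
        obtain ⟨x, hx0, hxP, hxspan⟩ := exists_gen (hpts P hP)
        rw [← Finset.card_filter]
        have he : ((Finset.univ.erase (0 : Fin (r + 2) → F)).filter
            (fun w => P ≤ LinearMap.ker (myphi w)))
            = (Finset.univ.filter (fun w : Fin (r + 2) → F =>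
                w ∈ LinearMap.ker (myphi x))).erase 0 := by
          ext w
          simp only [Finset.mem_filter, Finset.mem_erase, Finset.mem_univ,
            true_and, and_comm]
          rw [mem_ker_iff_le hxspan, LinearMap.mem_ker, LinearMap.mem_ker,
            myphi_comm]
        rw [he, Finset.card_erase_of_mem
          (by simp [LinearMap.mem_ker, myphi_apply]),
          card_submodule, finrank_ker_myphi hx0]
        rfl
      rw [Finset.sum_congr rfl hinner]
      simp [hcard, mul_comm]
    have hbig := Finset.card_nsmul_le_sum _ _ _ hlow
    rw [hsum, Finset.card_erase_of_mem (Finset.mem_univ 0), Finset.card_univ,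
      hcardV, smul_eq_mul] at hbig
    -- arithmetic contradiction
    set Q := c ^ r with hQ
    have hcr1 : c ^ (r + 1) = Q * c := by rw [pow_succ]
    have hcr2 : c ^ (r + 2) = Q * c * c := by rw [pow_succ, pow_succ]
    rw [hcr1, hcr2] at hbig
    have hQ1 : 1 ≤ Q := Nat.one_le_pow _ _ (by omega)
    have e1 : (Q * c * c - 1) * Q = Q * c * c * Q - Q := by
      rw [Nat.sub_mul, one_mul]
    have e2 : Q * c * (Q * c - 1) = Q * c * (Q * c) - Q * c := by
      rw [mul_comm (Q * c) (Q * c - 1), Nat.sub_mul, one_mul, mul_comm]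
    rw [e1, e2] at hbig
    have hAB : Q * c * c * Q = Q * c * (Q * c) := by ring
    have hQD : Q < Q * c := by nlinarith
    have hDB : Q * c ≤ Q * c * (Q * c) := Nat.le_mul_of_pos_right _ (by omega)
    omega
  obtain ⟨w, hw0, hwempty⟩ := hempty
  refine ⟨LinearMap.ker (myphi w), by rw [finrank_ker_myphi hw0], ?_⟩
  set H := LinearMap.ker (myphi w) with hH
  have hnotin : ∀ P ∈ S, ¬ P ≤ H := by
    intro P hP hle
    have : P ∈ S.filter fun P => P ≤ H := Finset.mem_filter.mpr ⟨hP, hle⟩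
    rw [Finset.card_eq_zero] at hwempty
    rw [hwempty] at this
    exact absurd this (Finset.notMem_empty P)
  -- the union of points of S covers the complement of H
  have hTsub : S.biUnion nz ⊆ Finset.univ.filter (fun x => x ∉ H) := by
    intro x hx
    simp only [Finset.mem_biUnion, hnz, Finset.mem_filter] at hx
    obtain ⟨P, hPS, _, hxP, hx0⟩ := hx
    simp only [Finset.mem_filter, Finset.mem_univ, true_and]
    intro hxH
    exact hnotin P hPS (by
      rw [eq_span_of_mem (hpts P hPS) hxP hx0, Submodule.span_le,
        Set.singleton_subset_iff]
      exact hxH)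
  have hTcard : (Finset.univ.filter (fun x : Fin (r + 2) → F => x ∉ H)).card
      = c ^ (r + 2) - c ^ (r + 1) := by
    have := Finset.card_filter_add_card_filter_not
      (s := (Finset.univ : Finset (Fin (r + 2) → F))) (p := fun x => x ∈ H)
    rw [Finset.card_univ, hcardV, card_submodule] at this
    have hfH : finrank F H = r + 1 := by rw [hH, finrank_ker_myphi hw0]; omega
    rw [hfH, ← hc] at this
    have hle : c ^ (r + 1) ≤ c ^ (r + 2) := Nat.pow_le_pow_right (by omega) (by omega)
    omega
  have hUT : S.biUnion nz = Finset.univ.filter (fun x => x ∉ H) := by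
    apply Finset.eq_of_subset_of_card_le hTsub
    rw [hTcard, hUcard]
    have : c ^ (r + 1) * (c - 1) = c ^ (r + 2) - c ^ (r + 1) := by
      rw [Nat.mul_sub, mul_one, ← pow_succ]
    omega
  intro P hP1
  constructor
  · exact fun hPS => hnotin P hPS
  · intro hPH
    obtain ⟨x, hx0, hxP, hxspan⟩ := exists_gen hP1
    have hxH : x ∉ H := by
      intro hxH
      exact hPH (by
        rw [hxspan, Submodule.span_le, Set.singleton_subset_iff]; exact hxH)
    have hxU : x ∈ S.biUnion nz := by
      rw [hUT]; simp [hxH]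
    simp only [Finset.mem_biUnion, hnz, Finset.mem_filter] at hxU
    obtain ⟨Q, hQS, _, hxQ, _⟩ := hxU
    have : Q = P := by
      rw [eq_span_of_mem (hpts Q hQS) hxQ hx0, ← hxspan]
    rwa [← this]
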